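/- Let n be an even positive integer with prime factorization n = 2 p_1^{J_1} p_2^{J_2} ··· p_s^{J_s}, where s ≥ 2, p_1 < ··· < p_s are odd primes, each J_i ≥ 1, and for every r ∈ {1,...,s-1} one has ∏_{i=1}^{r} p_i^{J_i} < p_{r+1}. Let D_1 and D_2 be sets of divisors of n such that (1) ∑_{d | n, d odd, d ∈ D_1} φ(n/d) = ∑_{d | n, d odd, d ∈ D_2} φ(n/d), and (2) ∑_{d | n, d even, d ∈ D_1} φ(n/d) = ∑_{d | n, d even, d ∈ D_2} φ(n/d). Then D_1 = D_2. -/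

import Mathlib

open Finset

/-- Strict comparison for subset sums: if `t ∈ A \ B` with maximal rank among the
symmetric difference, the sum over `B` is strictly less than over `A`. -/
lemma sum_lt_of_superinc (T : Finset ℕ) (v ρ : ℕ → ℕ)
    (hinj : Set.InjOn ρ T)
    (hsup : ∀ t ∈ T, ∑ u ∈ T.filter (fun u => ρ u < ρ t), v u < v t)
    {A B : Finset ℕ} (hA : A ⊆ T) (hB : B ⊆ T)
    (t : ℕ) (htA : t ∈ A) (htB : t ∉ B)
    (hag : ∀ u ∈ T, ρ t < ρ u → (u ∈ A ↔ u ∈ B)) :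
    ∑ b ∈ B, v b < ∑ a ∈ A, v a := by
  classical
  have hsplitA := Finset.sum_filter_add_sum_filter_not A (fun u => ρ t < ρ u) v
  have hsplitB := Finset.sum_filter_add_sum_filter_not B (fun u => ρ t < ρ u) v
  have hup : A.filter (fun u => ρ t < ρ u) = B.filter (fun u => ρ t < ρ u) := by
    ext u
    simp only [Finset.mem_filter]
    constructor
    · rintro ⟨hu, h⟩
      exact ⟨(hag u (hA hu) h).mp hu, h⟩
    · rintro ⟨hu, h⟩
      exact ⟨(hag u (hB hu) h).mpr hu, h⟩
  have hupsum : ∑ u ∈ A.filter (fun u => ρ t < ρ u), v u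
      = ∑ u ∈ B.filter (fun u => ρ t < ρ u), v u := by rw [hup]
  have hBlow : B.filter (fun u => ¬ ρ t < ρ u) ⊆ T.filter (fun u => ρ u < ρ t) := by
    intro u hu
    rw [Finset.mem_filter] at hu ⊢
    refine ⟨hB hu.1, ?_⟩
    rcases lt_or_eq_of_le (not_lt.mp hu.2) with h | h
    · exact h
    · exact absurd (hinj (hB hu.1) (hA htA) h) (fun he => htB (he ▸ hu.1))
  have h1 : ∑ u ∈ B.filter (fun u => ¬ ρ t < ρ u), v u < v t :=
    lt_of_le_of_lt (Finset.sum_le_sum_of_subset hBlow) (hsup t (hA htA))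
  have h2 : v t ≤ ∑ u ∈ A.filter (fun u => ¬ ρ t < ρ u), v u := by
    apply Finset.single_le_sum (fun i _ => Nat.zero_le (v i))
    simp [htA]
  omega

/-- Subset sums are injective for a family that is super-increasing with respect to
an injective rank function `ρ`. -/
lemma sum_inj_of_superinc (T : Finset ℕ) (v ρ : ℕ → ℕ)
    (hinj : Set.InjOn ρ T)
    (hsup : ∀ t ∈ T, ∑ u ∈ T.filter (fun u => ρ u < ρ t), v u < v t)
    {A B : Finset ℕ} (hA : A ⊆ T) (hB : B ⊆ T)
    (h : ∑ a ∈ A, v a = ∑ b ∈ B, v b) : A = B := by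
  classical
  by_contra hne
  have hDd : ((A \ B) ∪ (B \ A)).Nonempty := by
    rw [Finset.nonempty_iff_ne_empty]
    intro hcon
    rw [Finset.union_eq_empty, Finset.sdiff_eq_empty_iff_subset,
      Finset.sdiff_eq_empty_iff_subset] at hcon
    exact hne (Finset.Subset.antisymm hcon.1 hcon.2)
  obtain ⟨t, ht, hmax⟩ := Finset.exists_max_image _ ρ hDd
  have hag : ∀ u ∈ T, ρ t < ρ u → (u ∈ A ↔ u ∈ B) := by
    intro u _ hu
    by_contra hcon
    have : u ∈ (A \ B) ∪ (B \ A) := by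
      rw [Finset.mem_union, Finset.mem_sdiff, Finset.mem_sdiff]
      tauto
    exact absurd (hmax u this) (not_le.mpr hu)
  rcases Finset.mem_union.mp ht with h' | h'
  · rw [Finset.mem_sdiff] at h'
    exact absurd h (Nat.ne_of_gt
      (sum_lt_of_superinc T v ρ hinj hsup hA hB t h'.1 h'.2 hag))
  · rw [Finset.mem_sdiff] at h'
    exact absurd h (Nat.ne_of_lt
      (sum_lt_of_superinc T v ρ hinj hsup hB hA t h'.1 h'.2
        (fun u hu h'' => (hag u hu h'').symm)))

lemma geom_totient {q : ℕ} (hq : q.Prime) : ∀ k, ∑ j ∈ range (k + 1), Nat.totient (q ^ j) = q ^ k := by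
  intro k
  induction k with
  | zero => simp
  | succ k ih =>
    rw [Finset.sum_range_succ, ih, Nat.totient_prime_pow hq (Nat.succ_pos k),
      Nat.succ_sub_one, pow_succ]
    obtain ⟨r, hr⟩ := Nat.exists_eq_add_of_le hq.two_le
    subst hr
    have h1 : 2 + r - 1 = 1 + r := by omega
    rw [h1]
    ring

/-- The key number-theoretic lemma: for `M = ∏ pᵢ^{Jᵢ}` with the separation condition,
the totient of each divisor of `M` exceeds the sum of the totients of all smaller
divisors. -/
lemma totient_superinc (s : ℕ) (p J : ℕ → ℕ)
    (hp : ∀ i < s, (p i).Prime ∧ Odd (p i))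
    (hsep : ∀ r, 1 ≤ r → r < s → ∏ i ∈ Finset.range r, p i ^ J i < p r) :
    ∀ d ∈ (∏ i ∈ Finset.range s, p i ^ J i).divisors,
      ∑ e ∈ (∏ i ∈ Finset.range s, p i ^ J i).divisors.filter (fun e => e < d),
        Nat.totient e < Nat.totient d := by
  classical
  induction s with
  | zero =>
    intro d hd
    simp only [Finset.range_zero, Finset.prod_empty, Nat.divisors_one,
      Finset.mem_singleton] at hd ⊢
    subst hd
    simp
  | succ s ih =>
    -- restrict hypotheses
    have hp' : ∀ i < s, (p i).Prime ∧ Odd (p i) := fun i hi => hp i (Nat.lt_succ_of_lt hi)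
    have hsep' : ∀ r, 1 ≤ r → r < s → ∏ i ∈ Finset.range r, p i ^ J i < p r :=
      fun r h1 h2 => hsep r h1 (Nat.lt_succ_of_lt h2)
    set m := ∏ i ∈ Finset.range s, p i ^ J i with hm_def
    set q := p s with hq_def
    set K := J s with hK_def
    have hq : q.Prime := (hp s (Nat.lt_succ_self s)).1
    have hqodd : Odd q := (hp s (Nat.lt_succ_self s)).2
    have hq2 : 2 ≤ q := hq.two_le
    have hq3 : 3 ≤ q := by
      rcases hqodd with ⟨c, hc⟩
      omega
    have hm0 : 0 < m := by
      apply Finset.prod_pos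
      intro i hi
      exact pow_pos (hp' i (Finset.mem_range.mp hi)).1.pos _
    have hmodd : Odd m := by
      rw [← Nat.coprime_two_left]
      apply Nat.Coprime.prod_right
      intro i hi
      exact Nat.Coprime.pow_right _ ((hp' i (Finset.mem_range.mp hi)).2.coprime_two_left)
    have hmq : m < q := by
      rcases Nat.eq_zero_or_pos s with rfl | hs
      · simp only [hm_def, Finset.range_zero, Finset.prod_empty]
        omega
      · exact hsep s hs (Nat.lt_succ_self s)
    have hmq1 : m + 1 < q := by
      rcases hmodd with ⟨a, ha⟩
      rcases hqodd with ⟨b, hb⟩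
      omega
    have hcopmq : Nat.Coprime m q := by
      refine ((hq.coprime_iff_not_dvd).mpr fun hdvd => ?_).symm
      exact absurd (Nat.le_of_dvd hm0 hdvd) (not_le.mpr hmq)
    have hMrw : ∏ i ∈ Finset.range (s + 1), p i ^ J i = m * q ^ K := by
      rw [Finset.prod_range_succ]
    have hM0 : m * q ^ K ≠ 0 := by positivity
    -- decomposition of divisors
    have hdec : ∀ d, d ∣ m * q ^ K → ∃ e k, e ∣ m ∧ k ≤ K ∧ d = e * q ^ k := by
      intro d hd
      obtain ⟨e, c, he, hc, heq⟩ := exists_dvd_and_dvd_of_dvd_mul hd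
      obtain ⟨k, hk, rfl⟩ := (Nat.dvd_prime_pow hq).mp hc
      exact ⟨e, k, he, hk, heq⟩
    -- comparison
    have hlt : ∀ e k e' k', e ∣ m → e' ∣ m → k < k' → e * q ^ k < e' * q ^ k' := by
      intro e k e' k' he he' hkk
      have he'pos : 0 < e' := Nat.pos_of_dvd_of_pos he' hm0
      calc e * q ^ k ≤ m * q ^ k := Nat.mul_le_mul_right _ (Nat.le_of_dvd hm0 he)
        _ < q * q ^ k := (Nat.mul_lt_mul_right (pow_pos hq.pos _)).mpr hmq
        _ = q ^ (k + 1) := by ring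
        _ ≤ q ^ k' := Nat.pow_le_pow_right hq.pos hkk
        _ ≤ e' * q ^ k' := Nat.le_mul_of_pos_left _ he'pos
    have hcmp : ∀ e k e' k', e ∣ m → e' ∣ m →
        (e * q ^ k < e' * q ^ k' ↔ k < k' ∨ (k = k' ∧ e < e')) := by
      intro e k e' k' he he'
      rcases lt_trichotomy k k' with h | h | h
      · simp only [h, true_or, iff_true]
        exact hlt e k e' k' he he' h
      · subst h
        have : e * q ^ k < e' * q ^ k ↔ e < e' :=
          ⟨fun hh => lt_of_mul_lt_mul_right hh (Nat.zero_le _),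
           fun hh => (Nat.mul_lt_mul_right (pow_pos hq.pos _)).mpr hh⟩
        simp [this]
      · have hge : e' * q ^ k' < e * q ^ k := hlt e' k' e k he' he h
        constructor
        · intro hh
          exact absurd hh (not_lt.mpr (le_of_lt hge))
        · intro hh
          omega
    -- set equality
    have hset : (m * q ^ K).divisors =
        (Finset.range (K + 1)).biUnion (fun k => m.divisors.image (fun e => e * q ^ k)) := by
      ext d
      simp only [Nat.mem_divisors, Finset.mem_biUnion, Finset.mem_range, Finset.mem_image]
      constructor
      · rintro ⟨hd, -⟩
        obtain ⟨e, k, he, hk, rfl⟩ := hdec d hd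
        exact ⟨k, Nat.lt_succ_of_le hk, e, ⟨he, by omega⟩, rfl⟩
      · rintro ⟨k, hk, e, ⟨he1, -⟩, rfl⟩
        exact ⟨mul_dvd_mul he1 (pow_dvd_pow q (by omega)), hM0⟩
    -- main computation
    rw [hMrw]
    intro d hd
    obtain ⟨e, k, he, hk, rfl⟩ := hdec d (Nat.mem_divisors.mp hd).1
    have heM : e ∈ m.divisors := Nat.mem_divisors.mpr ⟨he, by omega⟩
    have hcope : ∀ e' k', e' ∣ m → Nat.Coprime e' (q ^ k') :=
      fun e' k' he' => (Nat.Coprime.coprime_dvd_left he' hcopmq).pow_right _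
    rw [hset, Finset.filter_biUnion]
    rw [Finset.sum_biUnion ?hdisj]
    case hdisj =>
      intro k₁ hk₁ k₂ hk₂ hne
      apply Finset.disjoint_left.mpr
      intro x hx₁ hx₂
      rw [Finset.mem_filter, Finset.mem_image] at hx₁ hx₂
      obtain ⟨⟨e₁, he₁, rfl⟩, -⟩ := hx₁
      obtain ⟨⟨e₂, he₂, heq⟩, -⟩ := hx₂
      rw [Nat.mem_divisors] at he₁ he₂
      rcases Nat.lt_or_ge k₁ k₂ with h | h
      · have := hlt e₁ k₁ e₂ k₂ he₁.1 he₂.1 h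
        omega
      · have h' : k₂ < k₁ := by omega
        have := hlt e₂ k₂ e₁ k₁ he₂.1 he₁.1 h'
        omega
    -- rewrite each inner sum
    have hinner : ∀ k' ∈ Finset.range (K + 1),
        ∑ x ∈ (m.divisors.image (fun e' => e' * q ^ k')).filter (fun x => x < e * q ^ k),
          Nat.totient x
        = ∑ e' ∈ m.divisors.filter (fun e' => e' * q ^ k' < e * q ^ k),
            Nat.totient (e' * q ^ k') := by
      intro k' _
      rw [Finset.filter_image]
      apply Finset.sum_image
      intro a _ b _ hab
      exact Nat.eq_of_mul_eq_mul_right (pow_pos hq.pos _) hab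
    rw [Finset.sum_congr rfl hinner]
    -- terms with k' > k vanish
    have hzero : ∀ k' ∈ Finset.range (K + 1), k' ∉ Finset.range (k + 1) →
        ∑ e' ∈ m.divisors.filter (fun e' => e' * q ^ k' < e * q ^ k),
            Nat.totient (e' * q ^ k') = 0 := by
      intro k' _ hk'
      rw [Finset.mem_range, not_lt] at hk'
      convert Finset.sum_empty
      rw [Finset.filter_eq_empty_iff]
      intro e' he'
      rw [Nat.mem_divisors] at he'
      rw [hcmp e' k' e k he'.1 he]
      omega
    rw [← Finset.sum_subset (Finset.range_subset_range.mpr (by omega : k + 1 ≤ K + 1)) hzero]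
    rw [Finset.sum_range_succ]
    -- k' = k term
    have hkterm : ∑ e' ∈ m.divisors.filter (fun e' => e' * q ^ k < e * q ^ k),
          Nat.totient (e' * q ^ k)
        = (∑ e' ∈ m.divisors.filter (fun e' => e' < e), Nat.totient e') * Nat.totient (q ^ k) := by
      rw [Finset.sum_mul]
      apply Finset.sum_congr
      · apply Finset.filter_congr
        intro e' he'
        rw [Nat.mem_divisors] at he'
        rw [hcmp e' k e k he'.1 he]
        simp
      · intro e' he'
        rw [Finset.mem_filter, Nat.mem_divisors] at he'
        exact Nat.totient_mul (hcope e' k he'.1.1)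
    -- k' < k terms
    have hlow : ∀ k' ∈ Finset.range k,
        ∑ e' ∈ m.divisors.filter (fun e' => e' * q ^ k' < e * q ^ k),
            Nat.totient (e' * q ^ k') = m * Nat.totient (q ^ k') := by
      intro k' hk'
      rw [Finset.mem_range] at hk'
      have hall : m.divisors.filter (fun e' => e' * q ^ k' < e * q ^ k) = m.divisors := by
        apply Finset.filter_true_of_mem
        intro e' he'
        rw [Nat.mem_divisors] at he'
        rw [hcmp e' k' e k he'.1 he]
        omega
      rw [hall]
      calc ∑ e' ∈ m.divisors, Nat.totient (e' * q ^ k')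
          = ∑ e' ∈ m.divisors, Nat.totient e' * Nat.totient (q ^ k') := by
            apply Finset.sum_congr rfl
            intro e' he'
            exact Nat.totient_mul (hcope e' k' (Nat.mem_divisors.mp he').1)
        _ = (∑ e' ∈ m.divisors, Nat.totient e') * Nat.totient (q ^ k') := by
            rw [Finset.sum_mul]
        _ = m * Nat.totient (q ^ k') := by rw [Nat.sum_totient]
    rw [Finset.sum_congr rfl hlow, hkterm]
    -- put together the bound
    have hBe : ∑ e' ∈ m.divisors.filter (fun e' => e' < e), Nat.totient e' < Nat.totient e :=
      ih hp' hsep' e heM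
    set Below := ∑ e' ∈ m.divisors.filter (fun e' => e' < e), Nat.totient e' with hB_def
    have htd : Nat.totient (e * q ^ k) = Nat.totient e * Nat.totient (q ^ k) :=
      Nat.totient_mul (hcope e k he)
    rw [htd]
    have hqk0 : 0 < Nat.totient (q ^ k) := Nat.totient_pos.mpr (pow_pos hq.pos _)
    rcases Nat.eq_zero_or_pos k with rfl | hkpos
    · simp only [Finset.range_zero, Finset.sum_empty]
      simp only [pow_zero, Nat.totient_one, mul_one]
      omega
    · have hG : ∑ k' ∈ Finset.range k, m * Nat.totient (q ^ k') = m * q ^ (k - 1) := by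
        rw [← Finset.mul_sum]
        congr 1
        conv_lhs => rw [show k = (k - 1) + 1 from by omega]
        rw [geom_totient hq]
      rw [hG]
      have hphiqk : Nat.totient (q ^ k) = q ^ (k - 1) * (q - 1) := Nat.totient_prime_pow hq hkpos
      have h2 : m * q ^ (k - 1) < Nat.totient (q ^ k) := by
        rw [hphiqk, mul_comm (q ^ (k - 1)) (q - 1)]
        exact (Nat.mul_lt_mul_right (pow_pos hq.pos _)).mpr (by omega)
      calc m * q ^ (k - 1) + Below * Nat.totient (q ^ k)
          < Nat.totient (q ^ k) + Below * Nat.totient (q ^ k) := by omega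
        _ = (Below + 1) * Nat.totient (q ^ k) := by ring
        _ ≤ Nat.totient e * Nat.totient (q ^ k) := Nat.mul_le_mul_right _ (by omega)

/-- For even `n = 2 p₁^{J₁} ⋯ p_s^{J_s}` with `∏_{i≤r} p_i^{J_i} < p_{r+1}`, sets of divisors
of `n` having equal odd-divisor and equal even-divisor totient sums coincide. -/
theorem totient_sum_inj_even
    (n s : ℕ) (p J : ℕ → ℕ)
    (heven : Even n) (hs : 2 ≤ s)
    (hp : ∀ i < s, (p i).Prime ∧ Odd (p i))
    (hJ : ∀ i < s, 1 ≤ J i)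
    (hmono : ∀ i j, i < j → j < s → p i < p j)
    (hfact : n = 2 * ∏ i ∈ Finset.range s, p i ^ J i)
    (hsep : ∀ r, 1 ≤ r → r < s → ∏ i ∈ Finset.range r, p i ^ J i < p r)
    (D₁ D₂ : Finset ℕ)
    (hD₁ : D₁ ⊆ n.divisors) (hD₂ : D₂ ⊆ n.divisors)
    (hoddsum : ∑ d ∈ D₁.filter (fun d => Odd d), Nat.totient (n / d)
        = ∑ d ∈ D₂.filter (fun d => Odd d), Nat.totient (n / d))
    (hevensum : ∑ d ∈ D₁.filter (fun d => Even d), Nat.totient (n / d)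
        = ∑ d ∈ D₂.filter (fun d => Even d), Nat.totient (n / d)) :
    D₁ = D₂ := by
  classical
  set M := ∏ i ∈ Finset.range s, p i ^ J i with hM_def
  have hM0 : 0 < M := by
    apply Finset.prod_pos
    intro i hi
    exact pow_pos (hp i (Finset.mem_range.mp hi)).1.pos _
  have hModd : Odd M := by
    rw [← Nat.coprime_two_left]
    apply Nat.Coprime.prod_right
    intro i hi
    exact Nat.Coprime.pow_right _ ((hp i (Finset.mem_range.mp hi)).2.coprime_two_left)
  have hn0 : n ≠ 0 := by rw [hfact]; positivity
  have hkey := totient_superinc s p J hp hsep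
  rw [← hM_def] at hkey
  -- divisors of M are odd
  have hdivodd : ∀ u, u ∣ M → Odd u := by
    intro u hu
    rw [← Nat.coprime_two_left]
    exact Nat.Coprime.coprime_dvd_right hu hModd.coprime_two_left
  -- the "reversed" key lemma
  have hkey' : ∀ c, c ∣ M →
      ∑ u ∈ M.divisors.filter (fun u => M / u < M / c), Nat.totient (M / u)
        < Nat.totient (M / c) := by
    intro c hc
    have hMc : M / c ∈ M.divisors := Nat.mem_divisors.mpr ⟨Nat.div_dvd_of_dvd hc, by omega⟩
    refine lt_of_le_of_lt (le_of_eq ?_) (hkey (M / c) hMc)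
    apply Finset.sum_nbij' (fun u => M / u) (fun w => M / w)
    · intro u hu
      rw [Finset.mem_filter, Nat.mem_divisors] at hu ⊢
      exact ⟨⟨Nat.div_dvd_of_dvd hu.1.1, by omega⟩, hu.2⟩
    · intro w hw
      rw [Finset.mem_filter, Nat.mem_divisors] at hw ⊢
      have hwM : w ∣ M := hw.1.1
      have hw0 : 0 < w := Nat.pos_of_dvd_of_pos hwM hM0
      refine ⟨⟨Nat.div_dvd_of_dvd hwM, by omega⟩, ?_⟩
      rw [Nat.div_div_self hwM (by omega)]
      exact hw.2
    · intro u hu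
      rw [Finset.mem_filter, Nat.mem_divisors] at hu
      exact Nat.div_div_self hu.1.1 (by omega)
    · intro w hw
      rw [Finset.mem_filter, Nat.mem_divisors] at hw
      exact Nat.div_div_self hw.1.1 (by omega)
    · intro u hu
      rfl
  -- odd divisors of n are exactly divisors of M
  have hodd_dvd : ∀ u, u ∣ n → Odd u → u ∣ M := by
    intro u hu hodd
    rw [hfact] at hu
    exact (Nat.Coprime.dvd_of_dvd_mul_left (hodd.coprime_two_left.symm) hu)
  have hMdvdn : ∀ u, u ∣ M → u ∣ n := by
    intro u hu
    rw [hfact]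
    exact hu.mul_left 2
  have hndivM : ∀ u, u ∣ M → n / u = 2 * (M / u) := by
    intro u hu
    rw [hfact, Nat.mul_div_assoc 2 hu]
  have hphinM : ∀ u, u ∣ M → Nat.totient (n / u) = Nat.totient (M / u) := by
    intro u hu
    rw [hndivM u hu]
    have hMu : Odd (M / u) := hdivodd _ (Nat.div_dvd_of_dvd hu)
    rw [Nat.totient_mul (hMu.coprime_two_left), Nat.totient_two, one_mul]
  -- Odd part
  have hodd_eq : D₁.filter (fun d => Odd d) = D₂.filter (fun d => Odd d) := by
    have hsubT : ∀ (D : Finset ℕ), D ⊆ n.divisors →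
        D.filter (fun d => Odd d) ⊆ M.divisors := by
      intro D hD u hu
      rw [Finset.mem_filter] at hu
      have := Nat.mem_divisors.mp (hD hu.1)
      exact Nat.mem_divisors.mpr ⟨hodd_dvd u this.1 hu.2, by omega⟩
    apply sum_inj_of_superinc M.divisors (fun u => Nat.totient (n / u)) (fun u => M / u)
      ?hinj ?hsup (hsubT D₁ hD₁) (hsubT D₂ hD₂) hoddsum
    case hinj =>
      intro a ha b hb hab
      simp only [Finset.coe_sort_coe, Finset.mem_coe, Nat.mem_divisors] at ha hb
      have h1 := Nat.div_div_self ha.1 (by omega : M ≠ 0)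
      have h2 := Nat.div_div_self hb.1 (by omega : M ≠ 0)
      dsimp only at hab
      rw [← h1, ← h2, hab]
    case hsup =>
      intro t ht
      rw [Nat.mem_divisors] at ht
      have h1 := hkey' t ht.1
      rw [hphinM t ht.1]
      refine lt_of_le_of_lt (le_of_eq ?_) h1
      apply Finset.sum_congr rfl
      intro u hu
      rw [Finset.mem_filter, Nat.mem_divisors] at hu
      exact hphinM u hu.1.1
  -- Even part
  have heven_sub : ∀ (D : Finset ℕ), D ⊆ n.divisors →
      D.filter (fun d => Even d) ⊆ n.divisors.filter (fun d => Even d) :=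
    fun D hD => Finset.filter_subset_filter _ hD
  have heven_half : ∀ u, u ∈ n.divisors.filter (fun d => Even d) →
      u / 2 ∣ M ∧ u = 2 * (u / 2) := by
    intro u hu
    rw [Finset.mem_filter, Nat.mem_divisors] at hu
    obtain ⟨⟨hdvd, -⟩, heu⟩ := hu
    have h2u : 2 ∣ u := heu.two_dvd
    have hu2 : u = 2 * (u / 2) := by omega
    refine ⟨?_, hu2⟩
    rw [hfact] at hdvd
    rw [hu2] at hdvd
    exact (mul_dvd_mul_iff_left (by norm_num : (2:ℕ) ≠ 0)).mp hdvd
  have hndiv2 : ∀ u, u ∈ n.divisors.filter (fun d => Even d) →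
      n / u = M / (u / 2) := by
    intro u hu
    obtain ⟨hdvd, hu2⟩ := heven_half u hu
    rw [hfact]
    conv_lhs => rw [hu2]
    exact Nat.mul_div_mul_left M (u / 2) (by norm_num)
  have heven_eq : D₁.filter (fun d => Even d) = D₂.filter (fun d => Even d) := by
    apply sum_inj_of_superinc (n.divisors.filter (fun d => Even d))
      (fun u => Nat.totient (n / u)) (fun u => M / (u / 2))
      ?hinj ?hsup (heven_sub D₁ hD₁) (heven_sub D₂ hD₂) hevensum
    case hinj =>
      intro a ha b hb hab
      simp only [Finset.coe_sort_coe, Finset.mem_coe] at ha hb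
      obtain ⟨hda, ha2⟩ := heven_half a ha
      obtain ⟨hdb, hb2⟩ := heven_half b hb
      have h1 := Nat.div_div_self hda (by omega : M ≠ 0)
      have h2 := Nat.div_div_self hdb (by omega : M ≠ 0)
      dsimp only at hab
      have : a / 2 = b / 2 := by rw [← h1, ← h2, hab]
      omega
    case hsup =>
      intro t ht
      obtain ⟨hdt, ht2⟩ := heven_half t ht
      have h1 := hkey' (t / 2) hdt
      rw [hndiv2 t ht]
      refine lt_of_le_of_lt (le_of_eq ?_) h1
      -- bijection u ↦ u / 2
      apply Finset.sum_nbij' (fun u => u / 2) (fun w => 2 * w)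
      · intro u hu
        rw [Finset.mem_filter] at hu ⊢
        obtain ⟨hdu, -⟩ := heven_half u hu.1
        exact ⟨Nat.mem_divisors.mpr ⟨hdu, by omega⟩, hu.2⟩
      · intro w hw
        rw [Finset.mem_filter, Nat.mem_divisors] at hw
        obtain ⟨⟨hwM, -⟩, hwlt⟩ := hw
        have h2w : (2 * w) / 2 = w := by omega
        rw [Finset.mem_filter, Finset.mem_filter, Nat.mem_divisors]
        refine ⟨⟨⟨?_, hn0⟩, even_two_mul w⟩, ?_⟩
        · rw [hfact]; exact mul_dvd_mul_left 2 hwM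
        · rw [h2w]; exact hwlt
      · intro u hu
        rw [Finset.mem_filter] at hu
        obtain ⟨-, hu2⟩ := heven_half u hu.1
        omega
      · intro w hw
        omega
      · intro u hu
        rw [Finset.mem_filter] at hu
        rw [hndiv2 u hu.1]
  -- combine
  have h1 := Finset.filter_union_filter_not_eq (fun d => Odd d) D₁
  have h2 := Finset.filter_union_filter_not_eq (fun d => Odd d) D₂
  have hOE : ∀ (D : Finset ℕ), D.filter (fun d => ¬ Odd d) = D.filter (fun d => Even d) := by
    intro D
    apply Finset.filter_congr
    intro d _
    exact (Nat.not_odd_iff_even).symm.symm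
  rw [← h1, ← h2, hOE, hOE, hodd_eq, heven_eq]
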